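/- There exists a unique V* ∈ 𝓕 such that Φ(V*) = V*, and for every V ∈ 𝓕 the sequence (Φ^n(V))_{n∈ℕ} converges to V* in the metric d. -/

import Mathlib

/-- The upset of `A` within `[0,1]^K`: points of `[0,1]^K` dominating some point of `A`. -/
def upset (K : ℕ) (A : Set (Fin K → ℝ)) : Set (Fin K → ℝ) :=
  {x | x ∈ Set.Icc (0 : Fin K → ℝ) 1 ∧ ∃ y ∈ A, y ≤ x}

/-- Membership in the space `𝓕`: a nonempty Pareto frontier in `[0,1]^K`
(no element dominates a different element) whose upset is closed and convex. -/
def memF (K : ℕ) (V : Set (Fin K → ℝ)) : Prop :=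
  V.Nonempty ∧ V ⊆ Set.Icc (0 : Fin K → ℝ) 1 ∧
    (∀ u ∈ V, ∀ v ∈ V, u ≤ v → u = v) ∧
    IsClosed (upset K V) ∧ Convex ℝ (upset K V)

/-- The metric `d` on `𝓕`: Hausdorff distance (for the ℓ∞ norm) between upsets. -/
noncomputable def dF (K : ℕ) (U V : Set (Fin K → ℝ)) : ℝ :=
  Metric.hausdorffDist (upset K U) (upset K V)

/-- The lower Pareto frontier `Λ(S)`: the minimal elements of `S` in the
coordinatewise order, i.e. the elements of `S` dominating no other element of `S`. -/
def pareto (K : ℕ) (S : Set (Fin K → ℝ)) : Set (Fin K → ℝ) :=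
  {x ∈ S | ∀ y ∈ S, y ≤ x → y = x}

/-- The probability simplex over `Fin m`. -/
def simplex (m : ℕ) : Set (Fin m → ℝ) :=
  {α | (∀ a, 0 ≤ α a) ∧ ∑ a, α a = 1}

/-- The one-stage operator `Ψ`. -/
def psi (K m n : ℕ) (hn : 0 < n) (β : ℝ) (r : Fin K → Fin m → Fin n → ℝ)
    (S : Set (Fin K → ℝ)) : Set (Fin K → ℝ) :=
  {u | ∃ α ∈ simplex m, ∃ R : Fin m → Fin n → Fin K → ℝ,
    (∀ a b, R a b ∈ S) ∧
    ∀ k, u k = Finset.univ.sup'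
      (Finset.univ_nonempty_iff.mpr (Fin.pos_iff_nonempty.mp hn))
      (fun b => ∑ a, α a * (r k a b + β * R a b k))}


namespace PhiAux

section A

variable {K : ℕ} {A B S C : Set (Fin K → ℝ)} {x y : Fin K → ℝ}

local notation "Ic" => (Set.Icc (0 : Fin K → ℝ) 1)

lemma upset_subset_Icc : upset K A ⊆ Ic := fun _ hx => hx.1

lemma upset_mono (h : A ⊆ B) : upset K A ⊆ upset K B :=
  fun x hx => ⟨hx.1, hx.2.choose, h hx.2.choose_spec.1, hx.2.choose_spec.2⟩

lemma subset_upset (h : A ⊆ Ic) : A ⊆ upset K A :=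
  fun x hx => ⟨h hx, x, hx, le_refl x⟩

lemma mem_upset_trans (hx : x ∈ Ic) (hy : y ∈ upset K A) (hxy : y ≤ x) : x ∈ upset K A :=
  ⟨hx, hy.2.choose, hy.2.choose_spec.1, le_trans hy.2.choose_spec.2 hxy⟩

lemma upset_upset : upset K (upset K A) = upset K A := by
  apply Set.Subset.antisymm
  · rintro x ⟨hx, y, hy, hle⟩
    exact mem_upset_trans hx hy hle
  · exact subset_upset upset_subset_Icc

lemma upset_eq_self (hIc : C ⊆ Ic) (hup : ∀ x ∈ Ic, ∀ y ∈ C, y ≤ x → x ∈ C) :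
    upset K C = C := by
  apply Set.Subset.antisymm
  · rintro x ⟨hx, y, hy, hle⟩
    exact hup x hx y hy hle
  · exact subset_upset hIc

lemma pareto_subset : pareto K S ⊆ S := fun _ hx => hx.1

lemma pareto_upset (hS : S ⊆ Ic) : pareto K (upset K S) = pareto K S := by
  ext x
  constructor
  · rintro ⟨⟨hxI, s, hs, hsx⟩, hmin⟩
    have hxS : x ∈ S := by
      have := hmin s (subset_upset hS hs) hsx
      rwa [← this]
    refine ⟨hxS, fun y hy hyx => hmin y (subset_upset hS hy) hyx⟩
  · rintro ⟨hxS, hmin⟩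
    refine ⟨subset_upset hS hxS, fun y hy hyx => ?_⟩
    obtain ⟨hyI, s, hs, hsy⟩ := hy
    have hsx : s = x := hmin s hs (le_trans hsy hyx)
    subst hsx
    exact le_antisymm hyx hsy

lemma isClosed_le_pi (x : Fin K → ℝ) : IsClosed {y : Fin K → ℝ | y ≤ x} := by
  have : {y : Fin K → ℝ | y ≤ x} = ⋂ k, {y : Fin K → ℝ | y k ≤ x k} := by
    ext y; simp [Pi.le_def]
  rw [this]
  exact isClosed_iInter fun k => isClosed_le (continuous_apply k) continuous_const

lemma exists_pareto_le (hS : IsCompact S) (hx : x ∈ S) : ∃ y ∈ pareto K S, y ≤ x := by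
  have hT : IsCompact (S ∩ {y | y ≤ x}) := hS.inter_right (isClosed_le_pi x)
  have hTne : (S ∩ {y | y ≤ x}).Nonempty := ⟨x, hx, le_refl x⟩
  have hcont : Continuous fun y : Fin K → ℝ => ∑ k, y k :=
    continuous_finset_sum _ fun k _ => continuous_apply k
  obtain ⟨z, hz, hzmin⟩ := hT.exists_isMinOn hTne hcont.continuousOn
  refine ⟨z, ⟨hz.1, fun w hw hwz => ?_⟩, hz.2⟩
  have hwT : w ∈ S ∩ {y | y ≤ x} := ⟨hw, le_trans hwz hz.2⟩
  have hsum : ∑ k, z k ≤ ∑ k, w k := hzmin hwT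
  by_contra hne
  have : ∃ k, w k ≠ z k := by
    by_contra hall
    push_neg at hall
    exact hne (funext hall)
  obtain ⟨k0, hk0⟩ := this
  have hlt : ∑ k, w k < ∑ k, z k :=
    Finset.sum_lt_sum (fun k _ => hwz k) ⟨k0, Finset.mem_univ _, lt_of_le_of_ne (hwz k0) hk0⟩
  linarith

lemma upset_pareto (hS : IsCompact S) : upset K (pareto K S) = upset K S := by
  apply Set.Subset.antisymm (upset_mono pareto_subset)
  rintro x ⟨hx, s, hs, hsx⟩
  obtain ⟨y, hy, hys⟩ := exists_pareto_le hS hs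
  exact ⟨hx, y, hy, le_trans hys hsx⟩


end A

section B

lemma continuous_sup' {ι X : Type*} [TopologicalSpace X] (s : Finset ι) (H : s.Nonempty)
    (f : ι → X → ℝ) (hf : ∀ i, Continuous (f i)) :
    Continuous fun x => s.sup' H fun i => f i x := by
  induction H using Finset.Nonempty.cons_induction with
  | singleton i => simpa using hf i
  | cons i s his hs ih =>
    have : (fun x => (Finset.cons i s his).sup' (Finset.cons_nonempty his) fun j => f j x) =
        fun x => max (f i x) (s.sup' hs fun j => f j x) :=
      funext fun x => Finset.sup'_cons hs (fun j => f j x)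
    rw [this]
    exact (hf i).max ih

lemma sup'_diff_le {ι : Type*} {s : Finset ι} (H : s.Nonempty) (f g : ι → ℝ) {c : ℝ}
    (hc : 0 ≤ c) (h : ∀ b ∈ s, |f b - g b| ≤ c) : |s.sup' H f - s.sup' H g| ≤ c := by
  rw [abs_sub_le_iff]
  constructor
  · rw [sub_le_iff_le_add]
    apply Finset.sup'_le
    intro b hb
    have := (abs_sub_le_iff.1 (h b hb)).1
    have h2 : g b ≤ s.sup' H g := Finset.le_sup' g hb
    linarith
  · rw [sub_le_iff_le_add]
    apply Finset.sup'_le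
    intro b hb
    have := (abs_sub_le_iff.1 (h b hb)).2
    have h2 : f b ≤ s.sup' H f := Finset.le_sup' f hb
    linarith

variable {K m n : ℕ} (hn : 0 < n) (β : ℝ) (r : Fin K → Fin m → Fin n → ℝ)
variable {S T : Set (Fin K → ℝ)}

local notation "Ic" => (Set.Icc (0 : Fin K → ℝ) 1)

lemma simplex_compact : IsCompact (simplex m) := by
  have hsub : simplex m ⊆ Set.Icc (0 : Fin m → ℝ) 1 := by
    rintro α ⟨h0, h1⟩
    refine ⟨fun a => h0 a, fun a => ?_⟩
    calc α a ≤ ∑ b, α b := Finset.single_le_sum (fun b _ => h0 b) (Finset.mem_univ a)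
    _ = 1 := h1
  have hcl : IsClosed (simplex m) := by
    have : simplex m = (⋂ a, {α : Fin m → ℝ | 0 ≤ α a}) ∩ {α | ∑ a, α a = 1} := by
      ext α; simp [simplex, Set.mem_iInter]
    rw [this]
    exact (isClosed_iInter fun a => isClosed_le continuous_const (continuous_apply a)).inter
      (isClosed_eq (continuous_finset_sum _ fun a _ => continuous_apply a) continuous_const)
  exact IsCompact.of_isClosed_subset isCompact_Icc hcl hsub

lemma psi_subset_Icc (hβ0 : 0 ≤ β) (hr : ∀ k a b, r k a b ∈ Set.Icc (0:ℝ) (1 - β))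
    (hS : S ⊆ Ic) : psi K m n hn β r S ⊆ Ic := by
  rintro u ⟨α, ⟨hα0, hα1⟩, R, hR, hu⟩
  have hterm : ∀ k a b, 0 ≤ α a * (r k a b + β * R a b k) ∧
      α a * (r k a b + β * R a b k) ≤ α a := by
    intro k a b
    have h1 := (hr k a b).1
    have h2 := (hr k a b).2
    have h3 : (0:ℝ) ≤ R a b k := (hS (hR a b)).1 k
    have h4 : R a b k ≤ 1 := (hS (hR a b)).2 k
    constructor
    · exact mul_nonneg (hα0 a) (by nlinarith)
    · have hle1 : r k a b + β * R a b k ≤ 1 := by nlinarith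
      calc α a * (r k a b + β * R a b k) ≤ α a * 1 :=
            mul_le_mul_of_nonneg_left hle1 (hα0 a)
      _ = α a := mul_one _
  constructor <;> intro k
  · rw [Pi.zero_apply, hu k]
    obtain ⟨b0⟩ := Fin.pos_iff_nonempty.mp hn
    refine le_trans ?_ (Finset.le_sup' _ (Finset.mem_univ b0))
    exact Finset.sum_nonneg fun a _ => (hterm k a b0).1
  · rw [Pi.one_apply, hu k]
    apply Finset.sup'_le
    intro b _
    calc ∑ a, α a * (r k a b + β * R a b k) ≤ ∑ a, α a :=
          Finset.sum_le_sum fun a _ => (hterm k a b).2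
    _ = 1 := hα1

lemma psi_mono (h : S ⊆ T) : psi K m n hn β r S ⊆ psi K m n hn β r T := by
  rintro u ⟨α, hα, R, hR, hu⟩
  exact ⟨α, hα, R, fun a b => h (hR a b), hu⟩

lemma psi_nonempty (hm : 0 < m) (hS : S.Nonempty) : (psi K m n hn β r S).Nonempty := by
  obtain ⟨s, hs⟩ := hS
  set α : Fin m → ℝ := fun a => if a = ⟨0, hm⟩ then (1:ℝ) else 0 with hαdef
  have hα : α ∈ simplex m := by
    constructor
    · intro a; by_cases h : a = ⟨0, hm⟩ <;> simp [hαdef, h]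
    · simp [hαdef]
  exact ⟨_, α, hα, fun _ _ => s, fun _ _ => hs, fun k => rfl⟩

lemma psi_compact (hS : IsCompact S) : IsCompact (psi K m n hn β r S) := by
  have hRset : IsCompact {R : Fin m → Fin n → Fin K → ℝ | ∀ a b, R a b ∈ S} := by
    have : {R : Fin m → Fin n → Fin K → ℝ | ∀ a b, R a b ∈ S} =
        Set.pi Set.univ (fun _ => Set.pi Set.univ fun _ => S) := by
      ext R; simp [Set.mem_pi]
    rw [this]
    exact isCompact_univ_pi fun _ => isCompact_univ_pi fun _ => hS
  have hmap : Continuous fun p : (Fin m → ℝ) × (Fin m → Fin n → Fin K → ℝ) =>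
      (fun k => Finset.univ.sup'
        (Finset.univ_nonempty_iff.mpr (Fin.pos_iff_nonempty.mp hn))
        (fun b => ∑ a, p.1 a * (r k a b + β * p.2 a b k))) := by
    refine continuous_pi fun k => continuous_sup' _ _ _ fun b => ?_
    refine continuous_finset_sum _ fun a _ => Continuous.mul ?_ ?_
    · exact (continuous_apply a).comp continuous_fst
    · exact continuous_const.add (continuous_const.mul
        (((continuous_apply k).comp ((continuous_apply b).comp
          ((continuous_apply a).comp continuous_snd)))))
  have himg : psi K m n hn β r S =
      (fun p : (Fin m → ℝ) × (Fin m → Fin n → Fin K → ℝ) =>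
        (fun k => Finset.univ.sup'
          (Finset.univ_nonempty_iff.mpr (Fin.pos_iff_nonempty.mp hn))
          (fun b => ∑ a, p.1 a * (r k a b + β * p.2 a b k)))) ''
        ((simplex m) ×ˢ {R | ∀ a b, R a b ∈ S}) := by
    ext u
    constructor
    · rintro ⟨α, hα, R, hR, hu⟩
      exact ⟨(α, R), ⟨hα, hR⟩, (funext fun k => (hu k).symm)⟩
    · rintro ⟨⟨α, R⟩, ⟨hα, hR⟩, rfl⟩
      exact ⟨α, hα, R, hR, fun k => rfl⟩
  rw [himg]
  exact (simplex_compact.prod hRset).image hmap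


end B

section C
open Pointwise
variable {K m n : ℕ} (hn : 0 < n) (β : ℝ) (r : Fin K → Fin m → Fin n → ℝ)
variable {S T C C' : Set (Fin K → ℝ)} {x y : Fin K → ℝ}

local notation "Ic" => (Set.Icc (0 : Fin K → ℝ) 1)

lemma upset_compact (hC : IsCompact C) (hCIc : C ⊆ Ic) : IsCompact (upset K C) := by
  have heq : upset K C = Ic ∩ (C + Ic) := by
    ext x
    constructor
    · rintro ⟨hx, y, hy, hle⟩
      refine ⟨hx, Set.mem_add.2 ⟨y, hy, x - y, ⟨?_, ?_⟩, by abel⟩⟩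
      · intro k; simpa using hle k
      · intro k
        have h1 := hx.2 k
        have h2 : (0:ℝ) ≤ y k := by simpa using (hCIc hy).1 k
        simp only [Pi.sub_apply, Pi.one_apply] at *
        linarith
    · rintro ⟨hx, hadd⟩
      obtain ⟨y, hy, z, hz, hyz⟩ := Set.mem_add.1 hadd
      refine ⟨hx, y, hy, fun k => ?_⟩
      have := hz.1 k
      simp only [Pi.zero_apply] at this
      have : y k ≤ y k + z k := by linarith
      rw [← hyz] at *
      simpa using this
  rw [heq]
  exact ((hC.add isCompact_Icc).inter_left isClosed_Icc)

lemma up_psi_upset (hβ0 : 0 ≤ β) (hr : ∀ k a b, r k a b ∈ Set.Icc (0:ℝ) (1 - β))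
    (hS : S ⊆ Ic) :
    upset K (psi K m n hn β r (upset K S)) = upset K (psi K m n hn β r S) := by
  apply Set.Subset.antisymm
  · have hsub : psi K m n hn β r (upset K S) ⊆ upset K (psi K m n hn β r S) := by
      rintro u ⟨α, hα, R', hR', hu⟩
      choose R hRS hRle using fun a b => (hR' a b).2
      refine ⟨psi_subset_Icc hn β r hβ0 hr upset_subset_Icc ⟨α, hα, R', hR', hu⟩, ?_⟩
      refine ⟨_, ⟨α, hα, R, hRS, fun k => rfl⟩, fun k => ?_⟩
      rw [hu k]
      apply Finset.sup'_mono_fun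
      intro b _
      apply Finset.sum_le_sum
      intro a _
      have h1 : R a b k ≤ R' a b k := hRle a b k
      have h2 : r k a b + β * R a b k ≤ r k a b + β * R' a b k := by nlinarith
      exact mul_le_mul_of_nonneg_left h2 (hα.1 a)
    calc upset K (psi K m n hn β r (upset K S))
        ⊆ upset K (upset K (psi K m n hn β r S)) := upset_mono hsub
    _ = upset K (psi K m n hn β r S) := upset_upset
  · exact upset_mono (psi_mono hn β r (subset_upset hS))

lemma upset_psi_convex (hβ0 : 0 ≤ β) (hS : S ⊆ Ic) (hconv : Convex ℝ S)
    (hSne : True) :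
    Convex ℝ (upset K (psi K m n hn β r S)) := by
  rintro x₁ ⟨hx₁I, u₁, ⟨α₁, hα₁, R₁, hR₁, hu₁⟩, hle₁⟩ x₂ ⟨hx₂I, u₂, ⟨α₂, hα₂, R₂, hR₂, hu₂⟩, hle₂⟩
    a b ha hb hab
  classical
  set α : Fin m → ℝ := fun p => a * α₁ p + b * α₂ p with hαdef
  have hα : α ∈ simplex m := by
    constructor
    · intro p
      exact add_nonneg (mul_nonneg ha (hα₁.1 p)) (mul_nonneg hb (hα₂.1 p))
    · simp only [hαdef]
      rw [Finset.sum_add_distrib, ← Finset.mul_sum, ← Finset.mul_sum, hα₁.2, hα₂.2]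
      linarith
  set R : Fin m → Fin n → Fin K → ℝ := fun p q =>
    if h : α p = 0 then R₁ p q
    else ((a * α₁ p) / α p) • R₁ p q + ((b * α₂ p) / α p) • R₂ p q with hRdef
  have hR : ∀ p q, R p q ∈ S := by
    intro p q
    simp only [hRdef]
    split_ifs with h
    · exact hR₁ p q
    · have hpos : 0 < α p := lt_of_le_of_ne (hα.1 p) (Ne.symm h)
      refine hconv (hR₁ p q) (hR₂ p q) (div_nonneg (mul_nonneg ha (hα₁.1 p)) hpos.le)
        (div_nonneg (mul_nonneg hb (hα₂.1 p)) hpos.le) ?_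
      field_simp
      rfl
  have key : ∀ p q k, α p * (r k p q + β * R p q k) =
      a * (α₁ p * (r k p q + β * R₁ p q k)) + b * (α₂ p * (r k p q + β * R₂ p q k)) := by
    intro p q k
    simp only [hRdef]
    split_ifs with h
    · have e1 : a * α₁ p = 0 ∧ b * α₂ p = 0 := by
        have h1 : 0 ≤ a * α₁ p := mul_nonneg ha (hα₁.1 p)
        have h2 : 0 ≤ b * α₂ p := mul_nonneg hb (hα₂.1 p)
        have : a * α₁ p + b * α₂ p = 0 := h
        constructor <;> linarith
      rw [h]
      linear_combination (-(r k p q) - β * R₁ p q k) * e1.1 + (-(r k p q) - β * R₂ p q k) * e1.2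
    · have hne : α p ≠ 0 := h
      simp only [Pi.add_apply, Pi.smul_apply, smul_eq_mul]
      field_simp
      ring
  set u : Fin K → ℝ := fun k => Finset.univ.sup'
      (Finset.univ_nonempty_iff.mpr (Fin.pos_iff_nonempty.mp hn))
      (fun q => ∑ p, α p * (r k p q + β * R p q k)) with hudef
  refine ⟨?_, u, ⟨α, hα, R, hR, fun k => rfl⟩, fun k => ?_⟩
  · exact (convex_Icc (0 : Fin K → ℝ) 1) hx₁I hx₂I ha hb hab
  · -- u k ≤ a • x₁ + b • x₂ at k
    simp only [hudef, Pi.add_apply, Pi.smul_apply, smul_eq_mul]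
    apply Finset.sup'_le
    intro q _
    have hq : ∑ p, α p * (r k p q + β * R p q k) =
        a * (∑ p, α₁ p * (r k p q + β * R₁ p q k)) +
        b * (∑ p, α₂ p * (r k p q + β * R₂ p q k)) := by
      rw [Finset.mul_sum, Finset.mul_sum, ← Finset.sum_add_distrib]
      exact Finset.sum_congr rfl fun p _ => key p q k
    rw [hq]
    have h1 : ∑ p, α₁ p * (r k p q + β * R₁ p q k) ≤ u₁ k := by
      rw [hu₁ k]
      exact Finset.le_sup' (fun q => ∑ p, α₁ p * (r k p q + β * R₁ p q k)) (Finset.mem_univ q)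
    have h2 : ∑ p, α₂ p * (r k p q + β * R₂ p q k) ≤ u₂ k := by
      rw [hu₂ k]
      exact Finset.le_sup' (fun q => ∑ p, α₂ p * (r k p q + β * R₂ p q k)) (Finset.mem_univ q)
    have h3 : u₁ k ≤ x₁ k := hle₁ k
    have h4 : u₂ k ≤ x₂ k := hle₂ k
    nlinarith

end C

section D
open Metric
variable {K m n : ℕ} (hn : 0 < n) (β : ℝ) (r : Fin K → Fin m → Fin n → ℝ)
variable {S S' C C' : Set (Fin K → ℝ)} {x y : Fin K → ℝ}

local notation "Ic" => (Set.Icc (0 : Fin K → ℝ) 1)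

lemma contract_one_sided (hβ0 : 0 ≤ β) (hr : ∀ k a b, r k a b ∈ Set.Icc (0:ℝ) (1 - β))
    (hS : IsCompact S) (hS' : IsCompact S') (hSne : S.Nonempty) (hS'ne : S'.Nonempty)
    (hSIc : S ⊆ Ic) (hS'Ic : S' ⊆ Ic) :
    ∀ x ∈ upset K (psi K m n hn β r S), ∃ y ∈ upset K (psi K m n hn β r S'),
      dist x y ≤ β * hausdorffDist S S' := by
  set h := hausdorffDist S S' with hdef
  have h0 : 0 ≤ h := hausdorffDist_nonneg
  have hfin : EMetric.hausdorffEdist S S' ≠ ⊤ :=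
    hausdorffEdist_ne_top_of_nonempty_of_bounded hSne hS'ne hS.isBounded hS'.isBounded
  rintro x ⟨hxI, u, ⟨α, hα, R, hR, hu⟩, hux⟩
  have hpick : ∀ a b, ∃ R' ∈ S', dist (R a b) R' ≤ h := by
    intro a b
    obtain ⟨y', hy', hdy⟩ := hS'.exists_infDist_eq_dist hS'ne (R a b)
    exact ⟨y', hy', by rw [← hdy]; exact infDist_le_hausdorffDist_of_mem (hR a b) hfin⟩
  choose R' hR'S' hR'dist using hpick
  set u' : Fin K → ℝ := fun k => Finset.univ.sup'
      (Finset.univ_nonempty_iff.mpr (Fin.pos_iff_nonempty.mp hn))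
      (fun b => ∑ a, α a * (r k a b + β * R' a b k)) with hu'def
  have hu'mem : u' ∈ psi K m n hn β r S' := ⟨α, hα, R', hR'S', fun k => rfl⟩
  have hu'Ic : u' ∈ Ic := psi_subset_Icc hn β r hβ0 hr hS'Ic hu'mem
  have hbound : ∀ k, |u k - u' k| ≤ β * h := by
    intro k
    rw [hu k, hu'def]
    apply sup'_diff_le _ _ _ (mul_nonneg hβ0 h0)
    intro b _
    rw [← Finset.sum_sub_distrib]
    refine le_trans (Finset.abs_sum_le_sum_abs _ _) ?_
    have hterm : ∀ a, |α a * (r k a b + β * R a b k) - α a * (r k a b + β * R' a b k)| ≤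
        α a * (β * h) := by
      intro a
      have heq : α a * (r k a b + β * R a b k) - α a * (r k a b + β * R' a b k) =
          α a * β * (R a b k - R' a b k) := by ring
      rw [heq, abs_mul, abs_of_nonneg (mul_nonneg (hα.1 a) hβ0)]
      have hd : |R a b k - R' a b k| ≤ h := by
        have := dist_le_pi_dist (R a b) (R' a b) k
        rw [Real.dist_eq] at this
        exact le_trans this (hR'dist a b)
      calc α a * β * |R a b k - R' a b k| ≤ α a * β * h :=
            mul_le_mul_of_nonneg_left hd (mul_nonneg (hα.1 a) hβ0)
      _ = α a * (β * h) := by ring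
    refine le_trans (Finset.sum_le_sum fun a _ => hterm a) ?_
    rw [← Finset.sum_mul, hα.2, one_mul]
  set y : Fin K → ℝ := fun k => max (x k) (u' k) with hydef
  have hyI : y ∈ Ic := by
    constructor <;> intro k <;> simp only [hydef, Pi.zero_apply, Pi.one_apply]
    · exact le_max_of_le_left (by simpa using hxI.1 k)
    · exact max_le (by simpa using hxI.2 k) (by simpa using hu'Ic.2 k)
  refine ⟨y, ⟨hyI, u', hu'mem, fun k => le_max_right _ _⟩, ?_⟩
  rw [dist_pi_le_iff (mul_nonneg hβ0 h0)]
  intro k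
  rw [Real.dist_eq, abs_le]
  have habs := abs_le.1 (hbound k)
  have hxk : u k ≤ x k := hux k
  constructor
  · simp only [hydef]
    rcases le_total (u' k) (x k) with hc | hc
    · rw [max_eq_left hc]; linarith [mul_nonneg hβ0 h0]
    · rw [max_eq_right hc]; linarith
  · simp only [hydef]
    have : x k ≤ max (x k) (u' k) := le_max_left _ _
    linarith [mul_nonneg hβ0 h0]

lemma contract (hβ0 : 0 ≤ β) (hr : ∀ k a b, r k a b ∈ Set.Icc (0:ℝ) (1 - β))
    (hS : IsCompact S) (hS' : IsCompact S') (hSne : S.Nonempty) (hS'ne : S'.Nonempty)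
    (hSIc : S ⊆ Ic) (hS'Ic : S' ⊆ Ic) :
    hausdorffDist (upset K (psi K m n hn β r S)) (upset K (psi K m n hn β r S')) ≤
      β * hausdorffDist S S' := by
  apply hausdorffDist_le_of_mem_dist (mul_nonneg hβ0 hausdorffDist_nonneg)
  · exact contract_one_sided hn β r hβ0 hr hS hS' hSne hS'ne hSIc hS'Ic
  · intro y hy
    obtain ⟨x, hx, hd⟩ :=
      contract_one_sided hn β r hβ0 hr hS' hS hS'ne hSne hS'Ic hSIc y hy
    exact ⟨x, hx, by rwa [hausdorffDist_comm] at hd⟩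

/-- componentwise clamp into `[0,1]`. -/
def clampP (K : ℕ) (x : Fin K → ℝ) : Fin K → ℝ := fun k => max 0 (min 1 (x k))

lemma clampP_mem_Icc : clampP K x ∈ Ic := by
  constructor <;> intro k <;> simp only [clampP, Pi.zero_apply, Pi.one_apply]
  · exact le_max_left _ _
  · exact max_le zero_le_one (min_le_left _ _)

lemma clampP_eq_self (hx : x ∈ Ic) : clampP K x = x := by
  funext k
  have h1 : (0:ℝ) ≤ x k := by simpa using hx.1 k
  have h2 : x k ≤ 1 := by simpa using hx.2 k
  simp [clampP, min_eq_right h2, max_eq_right h1]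

lemma clampP_continuous : Continuous (clampP K) :=
  continuous_pi fun k => continuous_const.max (continuous_const.min (continuous_apply k))

lemma clampP_lip : dist (clampP K x) (clampP K y) ≤ dist x y := by
  rw [dist_pi_le_iff dist_nonneg]
  intro k
  have h1 : dist (x k) (y k) ≤ dist x y := dist_le_pi_dist x y k
  refine le_trans ?_ h1
  simp only [clampP, Real.dist_eq]
  have hmin : |min 1 (x k) - min 1 (y k)| ≤ |x k - y k| := by
    rcases le_total (x k) (y k) with hc | hc <;>
      rcases le_total (1:ℝ) (x k) with h1' | h1' <;>
      rcases le_total (1:ℝ) (y k) with h2' | h2' <;>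
      simp [min_eq_left, min_eq_right, h1', h2', abs_le] <;>
      constructor <;> cases abs_le.1 (le_refl |x k - y k|) <;> cases abs_cases (x k - y k) <;>
      linarith
  refine le_trans ?_ hmin
  rcases le_total (min 1 (x k)) 0 with h1' | h1' <;> rcases le_total (min 1 (y k)) 0 with h2' | h2' <;>
    [skip; skip; skip; skip] <;>
    first
    | (rw [max_eq_left h1', max_eq_left h2']; simp [abs_nonneg])
    | (rw [max_eq_left h1', max_eq_right h2']; cases abs_cases (min 1 (x k) - min 1 (y k)) <;> cases abs_cases ((0:ℝ) - min 1 (y k)) <;> linarith)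
    | (rw [max_eq_right h1', max_eq_left h2']; cases abs_cases (min 1 (x k) - min 1 (y k)) <;> cases abs_cases (min 1 (x k) - 0) <;> linarith)
    | (rw [max_eq_right h1', max_eq_right h2'])

lemma hausdorff_clamp (hC : IsCompact C) (hC' : IsCompact C')
    (hCne : C.Nonempty) (hC'ne : C'.Nonempty) :
    hausdorffDist (clampP K '' C) (clampP K '' C') ≤ hausdorffDist C C' := by
  have hfin : EMetric.hausdorffEdist C C' ≠ ⊤ :=
    hausdorffEdist_ne_top_of_nonempty_of_bounded hCne hC'ne hC.isBounded hC'.isBounded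
  have hfin' : EMetric.hausdorffEdist C' C ≠ ⊤ := by
    rwa [EMetric.hausdorffEdist, hausdorffEDist_comm] at hfin
  apply hausdorffDist_le_of_mem_dist hausdorffDist_nonneg
  · rintro x ⟨c, hc, rfl⟩
    obtain ⟨c', hc', hdc⟩ := hC'.exists_infDist_eq_dist hC'ne c
    refine ⟨clampP K c', ⟨c', hc', rfl⟩, ?_⟩
    refine le_trans clampP_lip ?_
    rw [← hdc]
    exact infDist_le_hausdorffDist_of_mem hc hfin
  · rintro y ⟨c', hc', rfl⟩
    obtain ⟨c, hc, hdc⟩ := hC.exists_infDist_eq_dist hCne c'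
    refine ⟨clampP K c, ⟨c, hc, rfl⟩, ?_⟩
    refine le_trans clampP_lip ?_
    rw [← hdc, hausdorffDist_comm]
    exact infDist_le_hausdorffDist_of_mem hc' hfin'

end D

section E
open Metric TopologicalSpace Filter
variable {K : ℕ}

lemma convex_limit {Cj : ℕ → NonemptyCompacts (Fin K → ℝ)} {C : NonemptyCompacts (Fin K → ℝ)}
    (h : Tendsto Cj atTop (nhds C)) (hc : ∀ j, Convex ℝ (Cj j : Set (Fin K → ℝ))) :
    Convex ℝ (C : Set (Fin K → ℝ)) := by
  intro x hx y hy a b ha hb hab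
  set z := a • x + b • y with hzdef
  have hclosed : IsClosed (C : Set (Fin K → ℝ)) := C.isCompact.isClosed
  rw [hclosed.mem_iff_infDist_zero C.nonempty]
  have hd : Tendsto (fun j => dist (Cj j) C) atTop (nhds 0) :=
    tendsto_iff_dist_tendsto_zero.1 h
  have hbound : ∀ j, infDist z (C : Set (Fin K → ℝ)) ≤ 3 * dist (Cj j) C := by
    intro j
    have hfin : EMetric.hausdorffEdist (C : Set (Fin K → ℝ)) (Cj j : Set (Fin K → ℝ)) ≠ ⊤ :=
      hausdorffEdist_ne_top_of_nonempty_of_bounded C.nonempty (Cj j).nonempty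
        C.isCompact.isBounded (Cj j).isCompact.isBounded
    have hdist_eq : hausdorffDist (C : Set (Fin K → ℝ)) (Cj j : Set (Fin K → ℝ)) =
        dist (Cj j) C := by
      rw [NonemptyCompacts.dist_eq, hausdorffDist_comm]
    obtain ⟨xj, hxj, hdx⟩ := (Cj j).isCompact.exists_infDist_eq_dist (Cj j).nonempty x
    obtain ⟨yj, hyj, hdy⟩ := (Cj j).isCompact.exists_infDist_eq_dist (Cj j).nonempty y
    have hdx' : dist x xj ≤ dist (Cj j) C := by
      rw [← hdx, ← hdist_eq]
      exact infDist_le_hausdorffDist_of_mem hx hfin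
    have hdy' : dist y yj ≤ dist (Cj j) C := by
      rw [← hdy, ← hdist_eq]
      exact infDist_le_hausdorffDist_of_mem hy hfin
    set zj := a • xj + b • yj with hzjdef
    have hzj : zj ∈ (Cj j : Set (Fin K → ℝ)) := hc j hxj hyj ha hb hab
    have hzz : dist z zj ≤ a * dist x xj + b * dist y yj := by
      rw [dist_eq_norm]
      have : z - zj = a • (x - xj) + b • (y - yj) := by
        simp only [hzdef, hzjdef, smul_sub]; abel
      rw [this]
      refine le_trans (norm_add_le _ _) ?_
      rw [norm_smul, norm_smul, Real.norm_eq_abs, Real.norm_eq_abs,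
        abs_of_nonneg ha, abs_of_nonneg hb, dist_eq_norm, dist_eq_norm]
    have hzjC : infDist zj (C : Set (Fin K → ℝ)) ≤ dist (Cj j) C := by
      rw [NonemptyCompacts.dist_eq]
      exact infDist_le_hausdorffDist_of_mem hzj
        (by rwa [EMetric.hausdorffEdist, hausdorffEDist_comm] at hfin)
    have h1 : infDist z (C : Set (Fin K → ℝ)) ≤ infDist zj (C : Set (Fin K → ℝ)) + dist z zj :=
      infDist_le_infDist_add_dist
    have hax : a * dist x xj ≤ a * dist (Cj j) C := mul_le_mul_of_nonneg_left hdx' ha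
    have hby : b * dist y yj ≤ b * dist (Cj j) C := mul_le_mul_of_nonneg_left hdy' hb
    have hdnn : (0:ℝ) ≤ dist (Cj j) C := dist_nonneg
    nlinarith
  have hle : infDist z (C : Set (Fin K → ℝ)) ≤ 0 := by
    have h3 : Tendsto (fun j => 3 * dist (Cj j) C) atTop (nhds 0) := by
      simpa using hd.const_mul (3:ℝ)
    exact ge_of_tendsto h3 (Eventually.of_forall hbound)
  exact le_antisymm hle infDist_nonneg

end E

end PhiAux

open PhiAux Metric TopologicalSpace Filter Function in
/-- `Φ` has a unique fixed point `V*` in `𝓕`, and for every `V ∈ 𝓕`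
the iterates `Φ^n(V)` converge to `V*` in the metric `d`. -/
theorem phi_fixed_point {K m n : ℕ} (hK : 0 < K) (hm : 0 < m) (hn : 0 < n)
    (β : ℝ) (hβ : β ∈ Set.Ico (0:ℝ) 1)
    (r : Fin K → Fin m → Fin n → ℝ) (hr : ∀ k a b, r k a b ∈ Set.Icc (0:ℝ) (1 - β)) :
    ∃ Vstar : Set (Fin K → ℝ), memF K Vstar ∧
      pareto K (psi K m n hn β r Vstar) = Vstar ∧
      (∀ W : Set (Fin K → ℝ), memF K W → pareto K (psi K m n hn β r W) = W → W = Vstar) ∧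
      ∀ V : Set (Fin K → ℝ), memF K V →
        Filter.Tendsto
          (fun j => dF K ((fun S => pareto K (psi K m n hn β r S))^[j] V) Vstar)
          Filter.atTop (nhds 0) := by
  classical
  have hβ0 : 0 ≤ β := hβ.1
  set Ic : Set (Fin K → ℝ) := Set.Icc 0 1 with hIc
  set Φf : Set (Fin K → ℝ) → Set (Fin K → ℝ) :=
    fun S => pareto K (psi K m n hn β r S) with hΦf
  have hpsiIc : ∀ {S : Set (Fin K → ℝ)}, S ⊆ Ic → psi K m n hn β r S ⊆ Ic :=
    fun hS => psi_subset_Icc hn β r hβ0 hr hS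
  have hclampsub : ∀ C : Set (Fin K → ℝ), clampP K '' C ⊆ Ic := by
    rintro C x ⟨c, _, rfl⟩; exact clampP_mem_Icc
  have hclampid : ∀ {C : Set (Fin K → ℝ)}, C ⊆ Ic → clampP K '' C = C := by
    intro C hC
    rw [Set.image_congr (fun x hx => clampP_eq_self (hC hx)), Set.image_id']
  -- the operator on nonempty compacts
  have hFcomp : ∀ C : NonemptyCompacts (Fin K → ℝ),
      IsCompact (upset K (psi K m n hn β r (clampP K '' (C : Set (Fin K → ℝ))))) := fun C =>
    upset_compact (psi_compact hn β r (C.isCompact.image clampP_continuous))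
      (hpsiIc (hclampsub _))
  have hFne : ∀ C : NonemptyCompacts (Fin K → ℝ),
      (upset K (psi K m n hn β r (clampP K '' (C : Set (Fin K → ℝ))))).Nonempty := by
    intro C
    obtain ⟨u, hu⟩ := psi_nonempty hn β r hm (C.nonempty.image (clampP K))
    exact ⟨u, subset_upset (hpsiIc (hclampsub _)) hu⟩
  set F : NonemptyCompacts (Fin K → ℝ) → NonemptyCompacts (Fin K → ℝ) :=
    fun C => ⟨⟨upset K (psi K m n hn β r (clampP K '' (C : Set (Fin K → ℝ)))), hFcomp C⟩,
      hFne C⟩ with hF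
  have hFcoe : ∀ C : NonemptyCompacts (Fin K → ℝ),
      (F C : Set (Fin K → ℝ)) = upset K (psi K m n hn β r (clampP K '' (C : Set (Fin K → ℝ)))) :=
    fun C => rfl
  -- contraction
  have hlip : ∀ C C' : NonemptyCompacts (Fin K → ℝ), dist (F C) (F C') ≤ β * dist C C' := by
    intro C C'
    rw [NonemptyCompacts.dist_eq, NonemptyCompacts.dist_eq, hFcoe, hFcoe]
    calc hausdorffDist (upset K (psi K m n hn β r (clampP K '' (C : Set (Fin K → ℝ)))))
          (upset K (psi K m n hn β r (clampP K '' (C' : Set (Fin K → ℝ)))))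
        ≤ β * hausdorffDist (clampP K '' (C : Set (Fin K → ℝ)))
            (clampP K '' (C' : Set (Fin K → ℝ))) :=
          contract hn β r hβ0 hr (C.isCompact.image clampP_continuous)
            (C'.isCompact.image clampP_continuous) (C.nonempty.image _) (C'.nonempty.image _)
            (hclampsub _) (hclampsub _)
    _ ≤ β * hausdorffDist (C : Set (Fin K → ℝ)) (C' : Set (Fin K → ℝ)) :=
          mul_le_mul_of_nonneg_left
            (hausdorff_clamp C.isCompact C'.isCompact C.nonempty C'.nonempty) hβ0
  have hcw : ContractingWith ⟨β, hβ0⟩ F :=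
    ⟨by exact_mod_cast hβ.2, LipschitzWith.of_dist_le_mul fun C C' => hlip C C'⟩
  have hone : (0 : Fin K → ℝ) ∈ Ic := Set.mem_Icc.2 ⟨le_refl _, zero_le_one⟩
  haveI : Nonempty (NonemptyCompacts (Fin K → ℝ)) :=
    ⟨⟨⟨Ic, isCompact_Icc⟩, ⟨0, hone⟩⟩⟩
  set Cstar : NonemptyCompacts (Fin K → ℝ) := ContractingWith.fixedPoint F hcw with hCstar
  have hfix : F Cstar = Cstar := hcw.fixedPoint_isFixedPt
  set Cs : Set (Fin K → ℝ) := (Cstar : Set (Fin K → ℝ)) with hCsdef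
  have hCsIc : Cs ⊆ Ic := by
    have h1 : Cs = (F Cstar : Set (Fin K → ℝ)) := by rw [hfix]
    rw [h1, hFcoe]; exact upset_subset_Icc
  have hCs : Cs = upset K (psi K m n hn β r Cs) := by
    conv_lhs => rw [show Cs = (F Cstar : Set (Fin K → ℝ)) from by rw [hfix]]
    rw [hFcoe, hclampid hCsIc]
  have hCsup : ∀ x ∈ Ic, ∀ y ∈ Cs, y ≤ x → x ∈ Cs := by
    intro x hx y hy hyx
    rw [hCs] at hy ⊢
    exact mem_upset_trans hx hy hyx
  have hupCs : upset K Cs = Cs := upset_eq_self hCsIc hCsup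
  -- convexity of the fixed point
  set U0 : NonemptyCompacts (Fin K → ℝ) := ⟨⟨Ic, isCompact_Icc⟩, ⟨0, hone⟩⟩ with hU0
  have hiter0 : ∀ j, Convex ℝ ((F^[j] U0 : NonemptyCompacts (Fin K → ℝ)) : Set (Fin K → ℝ)) ∧
      ((F^[j] U0 : NonemptyCompacts (Fin K → ℝ)) : Set (Fin K → ℝ)) ⊆ Ic := by
    intro j
    induction j with
    | zero => exact ⟨convex_Icc _ _, subset_rfl⟩
    | succ j ih =>
      rw [Function.iterate_succ_apply']
      constructor
      · rw [hFcoe, hclampid ih.2]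
        exact upset_psi_convex hn β r hβ0 ih.2 ih.1 trivial
      · rw [hFcoe]; exact upset_subset_Icc
  have hCsconv : Convex ℝ Cs :=
    convex_limit (hcw.tendsto_iterate_fixedPoint U0) fun j => (hiter0 j).1
  -- the Pareto frontier of the fixed point
  set Vs : Set (Fin K → ℝ) := pareto K Cs with hVs
  have hupV : upset K Vs = Cs := by rw [hVs, upset_pareto Cstar.isCompact, hupCs]
  have hVIc : Vs ⊆ Ic := fun x hx => hCsIc (pareto_subset hx)
  have hVne : Vs.Nonempty := by
    obtain ⟨c, hc⟩ := Cstar.nonempty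
    obtain ⟨y, hy, _⟩ := exists_pareto_le Cstar.isCompact hc
    exact ⟨y, hy⟩
  have hVmem : memF K Vs := by
    refine ⟨hVne, hVIc, fun u hu v hv huv => hv.2 u (pareto_subset hu) huv, ?_, ?_⟩
    · rw [hupV]; exact Cstar.isCompact.isClosed
    · rw [hupV]; exact hCsconv
  -- the conjugation step
  have hstep : ∀ W : Set (Fin K → ℝ), W ⊆ Ic →
      Φf W = pareto K (psi K m n hn β r (upset K W)) := by
    intro W hWIc
    calc Φf W = pareto K (upset K (psi K m n hn β r W)) := (pareto_upset (hpsiIc hWIc)).symm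
    _ = pareto K (upset K (psi K m n hn β r (upset K W))) := by
        rw [up_psi_upset hn β r hβ0 hr hWIc]
    _ = pareto K (psi K m n hn β r (upset K W)) := pareto_upset (hpsiIc upset_subset_Icc)
  have hVfix : Φf Vs = Vs := by
    rw [hstep Vs hVIc, hupV]
    calc pareto K (psi K m n hn β r Cs)
        = pareto K (upset K (psi K m n hn β r Cs)) := (pareto_upset (hpsiIc hCsIc)).symm
    _ = pareto K Cs := by rw [← hCs]
  -- one application of Φ preserves memF and conjugates with F on upsets
  have hmemstep : ∀ W : Set (Fin K → ℝ), memF K W → memF K (Φf W) ∧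
      upset K (Φf W) = upset K (psi K m n hn β r (upset K W)) := by
    intro W hW
    obtain ⟨hWne, hWIc, hWanti, hWcl, hWcv⟩ := hW
    have hupWcomp : IsCompact (upset K W) :=
      IsCompact.of_isClosed_subset isCompact_Icc hWcl upset_subset_Icc
    have hpsicomp : IsCompact (psi K m n hn β r (upset K W)) := psi_compact hn β r hupWcomp
    have hup_eq : upset K (Φf W) = upset K (psi K m n hn β r (upset K W)) := by
      rw [hstep W hWIc]; exact upset_pareto hpsicomp
    have hupWne : (upset K W).Nonempty := hWne.mono (subset_upset hWIc)
    have hpsi_ne : (psi K m n hn β r (upset K W)).Nonempty := psi_nonempty hn β r hm hupWne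
    refine ⟨⟨?_, ?_, fun u hu v hv huv => hv.2 u (pareto_subset hu) huv, ?_, ?_⟩, hup_eq⟩
    · rw [hstep W hWIc]
      obtain ⟨u, hu⟩ := hpsi_ne
      obtain ⟨y, hy, _⟩ := exists_pareto_le hpsicomp hu
      exact ⟨y, hy⟩
    · exact fun x hx => hpsiIc hWIc (pareto_subset hx)
    · rw [hup_eq]
      exact (upset_compact hpsicomp (hpsiIc upset_subset_Icc)).isClosed
    · rw [hup_eq]
      exact upset_psi_convex hn β r hβ0 upset_subset_Icc hWcv trivial
  refine ⟨Vs, hVmem, hVfix, ?_, ?_⟩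
  · -- uniqueness
    intro W hW hWfix
    have hWmemstep := hmemstep W hW
    obtain ⟨hWne, hWIc, hWanti, hWcl, hWcv⟩ := hW
    have hWcomp : IsCompact (upset K W) :=
      IsCompact.of_isClosed_subset isCompact_Icc hWcl upset_subset_Icc
    have hupWne : (upset K W).Nonempty := hWne.mono (subset_upset hWIc)
    have hupfix : upset K W = upset K (psi K m n hn β r (upset K W)) := by
      have h2 := hWmemstep.2
      rw [show Φf W = W from hWfix] at h2
      exact h2
    set CW : NonemptyCompacts (Fin K → ℝ) := ⟨⟨upset K W, hWcomp⟩, hupWne⟩ with hCW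
    have hCWfix : Function.IsFixedPt F CW := by
      apply NonemptyCompacts.ext
      rw [hFcoe]
      show upset K (psi K m n hn β r (clampP K '' upset K W)) = upset K W
      rw [hclampid upset_subset_Icc, ← hupfix]
    have hCWeq : CW = Cstar := hcw.fixedPoint_unique hCWfix
    have hsets : upset K W = Cs := by
      exact congrArg SetLike.coe hCWeq
    have hWpar : pareto K W = W :=
      Set.Subset.antisymm pareto_subset fun x hx => ⟨hx, fun y hy hle => hWanti y hy x hx hle⟩
    calc W = pareto K W := hWpar.symm
    _ = pareto K (upset K W) := (pareto_upset hWIc).symm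
    _ = pareto K Cs := by rw [hsets]
    _ = Vs := rfl
  · -- convergence
    intro V hV
    have hVIc' : V ⊆ Ic := hV.2.1
    have hVcl : IsClosed (upset K V) := hV.2.2.2.1
    have hVcomp : IsCompact (upset K V) :=
      IsCompact.of_isClosed_subset isCompact_Icc hVcl upset_subset_Icc
    have hupVne : (upset K V).Nonempty := hV.1.mono (subset_upset hVIc')
    set CV : NonemptyCompacts (Fin K → ℝ) := ⟨⟨upset K V, hVcomp⟩, hupVne⟩ with hCV
    have hit : ∀ j, memF K (Φf^[j] V) ∧
        upset K (Φf^[j] V) = ((F^[j] CV : NonemptyCompacts (Fin K → ℝ)) : Set (Fin K → ℝ)) := by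
      intro j
      induction j with
      | zero => exact ⟨hV, rfl⟩
      | succ j ih =>
        obtain ⟨hWmem, hWup⟩ := ih
        rw [Function.iterate_succ_apply', Function.iterate_succ_apply']
        obtain ⟨hmem', hup'⟩ := hmemstep _ hWmem
        refine ⟨hmem', ?_⟩
        rw [hup', hWup, hFcoe]
        have hsub : ((F^[j] CV : NonemptyCompacts (Fin K → ℝ)) : Set (Fin K → ℝ)) ⊆ Ic := by
          rw [← hWup]; exact upset_subset_Icc
        rw [hclampid hsub]
    have htend := tendsto_iff_dist_tendsto_zero.1 (hcw.tendsto_iterate_fixedPoint CV)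
    refine htend.congr fun j => ?_
    rw [NonemptyCompacts.dist_eq]
    show hausdorffDist ((F^[j] CV : NonemptyCompacts (Fin K → ℝ)) : Set (Fin K → ℝ)) Cs =
      dF K (Φf^[j] V) Vs
    rw [dF, (hit j).2, hupV]
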